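/- arXiv:1411.5647 — 3 statements merged into one kernel-verified Lean document; each statement's English description precedes it below -/
import Mathlib

section
/- Let u,v ∈ C* and consider the upper-triangular matrices X = [[u, 0],[0, u⁻¹]], Y = [[±1, 0],[1, ±1]] in SL(2,C) with u ≠ 0, ±1. Then X and Y satisfy the Whitehead link relation Y X Y⁻¹ X⁻¹ Y X⁻¹ Y⁻¹ X = X Y⁻¹ X⁻¹ Y X⁻¹ Y⁻¹ X Y. -/
set_option maxHeartbeats 2000000 in
/-- The matrices `X = diag(u, u⁻¹)` (with `u ≠ 0, ±1`) and `Y = [[±1, 0],[1, ±1]]` satisfy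
the Whitehead link relation. -/
theorem whitehead_relation_reducible_nonabelian (u ε : ℂ) (hu : u ≠ 0)
    (hu1 : u ≠ 1) (hu2 : u ≠ -1) (hε : ε = 1 ∨ ε = -1) :
    let X : Matrix (Fin 2) (Fin 2) ℂ := !![u, 0; 0, u⁻¹]
    let Y : Matrix (Fin 2) (Fin 2) ℂ := !![ε, 0; 1, ε]
    let Xi : Matrix (Fin 2) (Fin 2) ℂ := !![u⁻¹, 0; 0, u]
    let Yi : Matrix (Fin 2) (Fin 2) ℂ := !![ε, 0; -1, ε]
    Y * X * Yi * Xi * Y * Xi * Yi * X = X * Yi * Xi * Y * Xi * Yi * X * Y := by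
  intro X Y Xi Yi
  simp only [X, Y, Xi, Yi]
  rcases hε with h | h <;> subst h <;>
    ext i j <;> fin_cases i <;> fin_cases j <;>
    simp [Matrix.mul_apply, Fin.sum_univ_succ] <;>
    field_simp <;> ring
end

section
/- Let ρ: ⟨x,y | yxy⁻¹x⁻¹yx⁻¹y⁻¹x = xy⁻¹x⁻¹yx⁻¹y⁻¹xy⟩ → SL(2,C) be an upper-triangular representation with ρ(x) = [[u, 0],[0, u⁻¹]] (u ≠ ±1, after conjugating off the upper-right entry) and ρ(y) = [[v, 1],[0, v⁻¹]]. Then the defining relation holds if and only if v = ±1. -/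
set_option maxHeartbeats 1000000 in
set_option linter.unnecessarySeqFocus false in
/-- For `ρ(x) = diag(u, u⁻¹)` with `u ≠ ±1` and `ρ(y) = [[v, 1],[0, v⁻¹]]`, the Whitehead
link relation holds if and only if `v = ±1`. -/
theorem whitehead_relation_upper_triangular_iff (u v : ℂ) (hu : u ≠ 0) (hv : v ≠ 0)
    (hu1 : u ≠ 1) (hu2 : u ≠ -1) :
    let X : Matrix (Fin 2) (Fin 2) ℂ := !![u, 0; 0, u⁻¹]
    let Y : Matrix (Fin 2) (Fin 2) ℂ := !![v, 1; 0, v⁻¹]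
    let Xi : Matrix (Fin 2) (Fin 2) ℂ := !![u⁻¹, 0; 0, u]
    let Yi : Matrix (Fin 2) (Fin 2) ℂ := !![v⁻¹, -1; 0, v]
    (Y * X * Yi * Xi * Y * Xi * Yi * X = X * Yi * Xi * Y * Xi * Yi * X * Y ↔
      (v = 1 ∨ v = -1)) := by
  intro X Y Xi Yi
  have hu1' : u - 1 ≠ 0 := sub_ne_zero.mpr hu1
  have hu2' : u + 1 ≠ 0 := by intro h; exact hu2 (by linear_combination h)
  constructor
  · intro h
    simp only [X, Y, Xi, Yi, Matrix.mul_fin_two] at h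
    have h01 := congrFun (congrFun h 0) 1
    ring_nf at h01
    norm_num [Matrix.cons_val_zero, Matrix.cons_val_one, Matrix.head_cons] at h01
    field_simp at h01
    have key : (u ^ 10 * v ^ 8 * ((u - 1) * (u + 1)) ^ 2) * ((1 - v) * (1 + v)) = 0 := by
      linear_combination u ^ 10 * v ^ 8 * h01
    have hne : u ^ 10 * v ^ 8 * ((u - 1) * (u + 1)) ^ 2 ≠ 0 :=
      mul_ne_zero (mul_ne_zero (pow_ne_zero _ hu) (pow_ne_zero _ hv))
        (pow_ne_zero 2 (mul_ne_zero hu1' hu2'))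
    rcases mul_eq_zero.mp ((mul_eq_zero.mp key).resolve_left hne) with h' | h'
    · exact Or.inl (by linear_combination -h')
    · exact Or.inr (by linear_combination h')
  · rintro (rfl | rfl) <;>
      · simp only [X, Y, Xi, Yi, Matrix.mul_fin_two]
        ext i j
        fin_cases i <;> fin_cases j <;> (try norm_num) <;> (try field_simp) <;> (try ring)
end

section
/- The polynomial f(1,t,u,v) = u²v² t³ + uv(u²v² − 2u² − 2v² + 1) t² + (u⁴ + v⁴ − u²(v²−1)² − v²(u²−1)²) t + uv(u²−1)(v²−1), viewed as an element of C[t,u,v] (or of the coordinate ring of C × C* × C*), is irreducible. -/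
open Polynomial

noncomputable section

namespace CharVar

abbrev Rr := Polynomial (Polynomial ℂ)

def bb : Rr := X^2 * C (X^2) - 2*X^2 - C (2*X^2) + 1
def cc : Rr := X^4 + C (X^4) - X^2 * C ((X^2-1)^2) - C (X^2) * (X^2-1)^2
def dd : Rr := X^2 * C (X^2) * (X^2-1) * C (X^2-1)

lemma sqL (w : ℂ[X]) : w * w ≠ X^4 - 6*X^2 + 1 := by
  intro h
  have hq0 : (X^4 - 6*X^2 + 1 : ℂ[X]) ≠ 0 := by
    intro h0
    have := congrArg (Polynomial.eval 0) h0
    simp at this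
  have hw0 : w ≠ 0 := by rintro rfl; simp at h; exact hq0 h.symm
  have hdq : (X^4 - 6*X^2 + 1 : ℂ[X]).natDegree = 4 := by compute_degree!
  have hdw : w.natDegree = 2 := by
    have := natDegree_mul hw0 hw0
    rw [h, hdq] at this; omega
  have hder : derivative (X^4 - 6*X^2 + 1 : ℂ[X]) = 4*X^3 - 12*X := by
    simp [derivative_pow, map_ofNat]; ring
  have hdvd1 : w ∣ (X^4 - 6*X^2 + 1 : ℂ[X]) := ⟨w, h.symm⟩
  have hdvd2 : w ∣ (4*X^3 - 12*X : ℂ[X]) := by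
    rw [← hder, ← h, derivative_mul]
    exact ⟨derivative w + derivative w, by ring⟩
  have hbez : (32 - 12*X^2) * (X^4 - 6*X^2 + 1 : ℂ[X]) + (3*X^3 - 17*X) * (4*X^3 - 12*X) = 32 := by
    ring
  have hdvd : w ∣ (32 : ℂ[X]) := by
    rw [← hbez]; exact dvd_add (Dvd.dvd.mul_left hdvd1 _) (Dvd.dvd.mul_left hdvd2 _)
  have h32 : (32 : ℂ[X]) ≠ 0 := by
    intro h0
    have := congrArg (Polynomial.eval 0) h0; simp at this
  have := natDegree_le_of_dvd hdvd h32
  have h32d : (32 : ℂ[X]).natDegree = 0 := natDegree_ofNat _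
  omega

lemma cube (e : ℂ[X]) (h : e^3 - (X^2+1)*e^2 + 2*X^2*e = 0) : e = 0 := by
  have h' : e * (e^2 - (X^2+1)*e + 2*X^2) = 0 := by linear_combination h
  rcases mul_eq_zero.1 h' with h0 | hq
  · exact h0
  · exfalso
    apply sqL (2*e - (X^2+1))
    linear_combination 4*hq

def E23 : Rr →+* ℂ := (evalRingHom (3:ℂ)).comp (evalRingHom ((2:ℂ)•(1:ℂ[X])))

theorem no_root (r : Rr) : r^3 + bb*r^2 + cc*r + dd ≠ 0 := by
  intro hr
  have hE23 : ∀ z : Rr, z^3 + bb*z^2 + cc*z + dd = 0 →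
      (E23 z)^3 + 11*(E23 z)^2 - 240*(E23 z) + 864 = 0 := by
    intro z hz
    have h1 : E23 bb = 11 := by simp [E23, bb, smul_eq_mul, map_ofNat]; norm_num
    have h2 : E23 cc = -240 := by simp [E23, cc, smul_eq_mul, map_ofNat]; norm_num
    have h3 : E23 dd = 864 := by simp [E23, dd, smul_eq_mul, map_ofNat]; norm_num
    have := congrArg E23 hz
    simp only [map_add, map_mul, map_pow, map_zero, h1, h2, h3] at this
    linear_combination this
  have hr0 : r ≠ 0 := by
    rintro rfl
    have := hE23 0 hr
    simp at this
  -- degree bound : natDegree r ≤ 2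
  have hdb : bb.natDegree ≤ 2 := by unfold bb; compute_degree
  have hdc : cc.natDegree ≤ 4 := by unfold cc; compute_degree
  have hdd : dd.natDegree ≤ 4 := by unfold dd; compute_degree
  set n := r.natDegree with hn
  have hdeg : n ≤ 2 := by
    by_contra hcon
    push_neg at hcon
    have heq : r*r*r = -(bb*(r*r) + cc*r + dd) := by linear_combination hr
    have hL : (r*r*r).natDegree = 3*n := by
      rw [natDegree_mul (mul_ne_zero hr0 hr0) hr0, natDegree_mul hr0 hr0]; ring
    have hR : (-(bb*(r*r) + cc*r + dd)).natDegree ≤ 2 + 2*n := by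
      rw [natDegree_neg]
      refine le_trans (natDegree_add_le _ _) ?_
      refine max_le (le_trans (natDegree_add_le _ _) ?_) (by omega)
      have h1 : (bb*(r*r)).natDegree ≤ 2 + 2*n := by
        refine le_trans (natDegree_mul_le) ?_
        have := natDegree_mul hr0 hr0
        omega
      have h2 : (cc*r).natDegree ≤ 4 + n := by
        refine le_trans (natDegree_mul_le) ?_; omega
      refine max_le (by omega) (by omega)
    rw [heq] at hL
    omega
  -- roots at u = ±1
  have hux : ∀ a : ℂ[X], (evalRingHom (a:ℂ[X])) bb = -(X^2+1) →
      (evalRingHom (a:ℂ[X])) cc = 2*X^2 → (evalRingHom (a:ℂ[X])) dd = 0 →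
      r.eval a = 0 := by
    intro a h1 h2 h3
    have := congrArg (evalRingHom (a:ℂ[X])) hr
    simp only [map_add, map_mul, map_pow, map_zero, h1, h2, h3] at this
    refine cube _ ?_
    show (r.eval a)^3 - (X^2+1)*(r.eval a)^2 + 2*X^2*(r.eval a) = 0
    have hev : (evalRingHom (a:ℂ[X])) r = r.eval a := rfl
    rw [hev] at this
    linear_combination this
  have hu1 : r.eval 1 = 0 := hux 1 (by simp [bb]; ring) (by simp [cc]; ring) (by simp [dd])
  have hum1 : r.eval (-1) = 0 := hux (-1) (by simp [bb]; ring) (by simp [cc]; ring) (by simp [dd])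
  -- (X-1)(X+1) ∣ r
  have hX21 : (X^2 - 1 : Rr) ≠ 0 := by
    intro h0
    have := congrArg (fun p => Polynomial.coeff p 2) h0
    simp [coeff_one] at this
  have hd1 : (X - 1 : Rr) ∣ r := by
    have := (dvd_iff_isRoot (p := r) (a := (1:ℂ[X]))).2 hu1
    simpa using this
  have hd2 : (X + 1 : Rr) ∣ r := by
    have := (dvd_iff_isRoot (p := r) (a := (-1:ℂ[X]))).2 hum1
    simpa [sub_neg_eq_add] using this
  have hcop : IsCoprime (X - 1 : Rr) (X + 1) := by
    refine ⟨-(C (C ((1:ℂ)/2))), C (C ((1:ℂ)/2)), ?_⟩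
    have h2 : (C (C ((1:ℂ)/2)) : Rr) * 2 = 1 := by
      have e1 : ((1:ℂ)/2) * 2 = 1 := by norm_num
      calc (C (C ((1:ℂ)/2)) : Rr) * 2 = C (C ((1:ℂ)/2)) * C (C 2) := by
            simp [map_ofNat]
        _ = C (C (((1:ℂ)/2)*2)) := by rw [← C_mul, ← C_mul]
        _ = 1 := by rw [e1]; simp
    linear_combination h2
  obtain ⟨s', hs'⟩ := hcop.mul_dvd hd1 hd2
  have hsf : r = (X^2 - 1) * s' := by rw [hs']; ring
  have hs'0 : s' ≠ 0 := by rintro rfl; rw [mul_zero] at hsf; exact hr0 hsf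
  have hdX21 : (X^2 - 1 : Rr).natDegree = 2 := by compute_degree!
  have hds' : s'.natDegree = 0 := by
    have := natDegree_mul hX21 hs'0
    rw [← hsf, hdX21] at this
    omega
  obtain ⟨s, hs⟩ : ∃ s : ℂ[X], s' = C s := ⟨s'.coeff 0, eq_C_of_natDegree_eq_zero hds'⟩
  have hs0 : s ≠ 0 := by rintro rfl; simp at hs; exact hs'0 hs
  -- v = 1 : s.eval 1 = 0
  have hv1 : s.eval 1 = 0 := by
    have h1 : (mapRingHom (evalRingHom (1:ℂ))) bb = -(X^2+1) := by
      simp [bb, Polynomial.map_ofNat, map_ofNat]; ring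
    have h2 : (mapRingHom (evalRingHom (1:ℂ))) cc = 2*X^2 := by
      simp [cc, Polynomial.map_ofNat, map_ofNat]; ring
    have h3 : (mapRingHom (evalRingHom (1:ℂ))) dd = 0 := by
      simp [dd, Polynomial.map_ofNat, map_ofNat]
    have := congrArg (mapRingHom (evalRingHom (1:ℂ))) hr
    simp only [map_add, map_mul, map_pow, map_zero, h1, h2, h3] at this
    have hz : (mapRingHom (evalRingHom (1:ℂ))) r = 0 := by
      refine cube _ ?_
      linear_combination this
    rw [hsf, hs] at hz
    simp only [map_mul, map_sub, map_pow, map_one, coe_mapRingHom, Polynomial.map_one,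
      Polynomial.map_sub, Polynomial.map_pow, Polynomial.map_X, Polynomial.map_C] at hz
    rcases mul_eq_zero.1 hz with h0 | h0
    · have : ((X:ℂ[X])^2 - 1).coeff 2 = 0 := by rw [h0]; simp
      simp [coeff_one] at this
    · have : (evalRingHom (1:ℂ)) s = 0 := by
        have := C_eq_zero.1 h0
        exact this
      simpa using this
  -- u = 0 : the three cases
  have h1 : (evalRingHom (0:ℂ[X])) bb = 1 - 2*X^2 := by simp [bb]; ring
  have h2 : (evalRingHom (0:ℂ[X])) cc = X^4 - X^2 := by simp [cc]
  have h3 : (evalRingHom (0:ℂ[X])) dd = 0 := by simp [dd]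
  have h0r : r.eval 0 = -s := by
    rw [hsf, hs]; simp
  have := congrArg (evalRingHom (0:ℂ[X])) hr
  simp only [map_add, map_mul, map_pow, map_zero, h1, h2, h3] at this
  have hev : (evalRingHom (0:ℂ[X])) r = r.eval 0 := rfl
  rw [hev, h0r] at this
  have hfact : (-s) * ((-s) - X^2) * ((-s) - (X^2 - 1)) = 0 := by
    linear_combination this
  rcases mul_eq_zero.1 hfact with h4 | h4
  · rcases mul_eq_zero.1 h4 with h5 | h5
    · exact hs0 (by simpa using h5)
    · -- s = -X^2, but s.eval 1 = 0 gives -1 = 0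
      have hseq : s = -X^2 := by linear_combination -h5
      rw [hseq] at hv1
      simp at hv1
  · -- s = 1 - X^2 : final contradiction
    have hseq : s = 1 - X^2 := by linear_combination -h4
    rw [hsf, hs, hseq] at hr
    have := hE23 _ hr
    have hE : E23 ((X^2 - 1) * C (1 - X^2)) = -24 := by
      simp [E23, smul_eq_mul, map_ofNat]
      norm_num
    rw [hE] at this
    norm_num at this


def a3 : Rr := X^2 * C (X^2)
def a2 : Rr := (X * C X) * bb
def a1 : Rr := cc
def a0 : Rr := X * C X * (X^2-1) * C (X^2-1)

def ff : Polynomial Rr := Polynomial.C a3 * X^3 + Polynomial.C a2 * X^2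
  + Polynomial.C a1 * X + Polynomial.C a0

abbrev K := FractionRing Rr
abbrev A : Rr →+* K := algebraMap Rr K

lemma hXne : (X : Rr) ≠ 0 := X_ne_zero
lemma hCXne : (C X : Rr) ≠ 0 := fun h => X_ne_zero (C_eq_zero.1 h)

lemma a3_ne : a3 ≠ 0 := by
  unfold a3
  refine mul_ne_zero (pow_ne_zero _ hXne) (fun h => ?_)
  exact pow_ne_zero 2 (X_ne_zero (R := ℂ)) (C_eq_zero.1 h)

-- no root in K
lemma no_root_K (z : K) : Polynomial.eval₂ A z ff ≠ 0 := by
  intro hz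
  simp only [ff, eval₂_add, eval₂_mul, eval₂_C, eval₂_X_pow, eval₂_X] at hz
  set y : K := A (X * C X) * z with hy
  have hGy : y^3 + A bb * y^2 + A cc * y + A dd = 0 := by
    have hb : A a2 = A (X * C X) * A bb := by rw [← map_mul]; rfl
    have h3 : A a3 = A X^2 * A (C X)^2 := by
      rw [show a3 = X^2 * (C X)^2 by rw [a3, map_pow], map_mul, map_pow, map_pow]
    have hc : A cc = A a1 := rfl
    have hd : A dd = A X * A (C X) * A a0 := by
      rw [← map_mul, ← map_mul]
      refine congrArg A ?_
      rw [dd, a0]; ring_nf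
      rw [map_pow]; ring
    have hxcx : A (X * C X) = A X * A (C X) := map_mul A _ _
    rw [hy, hd, hc, hxcx]
    rw [hxcx] at hb
    linear_combination (A X * A (C X)) * hz - z^3*(A X * A (C X))*h3 - z^2*(A X * A (C X))*hb
  have hmon : (X^3 + Polynomial.C bb * X^2 + Polynomial.C cc * X + Polynomial.C dd :
      Polynomial Rr).Monic := by
    have hlt : (Polynomial.C bb * X^2 + Polynomial.C cc * X + Polynomial.C dd :
        Polynomial Rr).degree < 3 := by
      refine lt_of_le_of_lt (degree_add_le _ _) ?_
      refine max_lt (lt_of_le_of_lt (degree_add_le _ _) ?_) ?_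
      · refine max_lt ?_ ?_
        · exact lt_of_le_of_lt (degree_mul_le _ _) (by
            refine lt_of_le_of_lt (add_le_add degree_C_le (degree_X_pow 2).le) ?_
            norm_num)
        · exact lt_of_le_of_lt (degree_mul_le _ _) (by
            refine lt_of_le_of_lt (add_le_add degree_C_le degree_X_le) ?_
            norm_num)
      · exact lt_of_le_of_lt degree_C_le (by norm_num)
    have := monic_X_pow_add (n := 3) hlt
    convert this using 1
    ring
  have hint : IsIntegral Rr y := by
    refine ⟨X^3 + Polynomial.C bb * X^2 + Polynomial.C cc * X + Polynomial.C dd, hmon, ?_⟩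
    simp only [eval₂_add, eval₂_mul, eval₂_C, eval₂_X_pow, eval₂_X]
    exact hGy
  obtain ⟨r, hr⟩ := IsIntegrallyClosed.isIntegral_iff.1 hint
  have hAz : A (r^3 + bb*r^2 + cc*r + dd) = 0 := by
    simp only [map_add, map_mul, map_pow, hr]
    exact hGy
  exact no_root r (IsFractionRing.injective Rr K (by rw [hAz, map_zero]))

end CharVar

namespace CharVar
open Polynomial

lemma ff_coeff3 : ff.coeff 3 = a3 := by
  simp [ff, coeff_add, coeff_C_mul, coeff_X_pow, coeff_X, coeff_C]
lemma ff_coeff1 : ff.coeff 1 = a1 := by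
  simp [ff, coeff_add, coeff_C_mul, coeff_X_pow, coeff_X, coeff_C]
def vP : ℂ[X] := X^4 - X^2
def vQ : ℂ[X] := 2*X^2 - (X^2-1)^2
def vW : ℂ[X] := 1 - X^2
lemma ccnf : cc = C vP + C vQ * X^2 + C vW * X^4 := by
  rw [cc, vP, vQ, vW]
  simp only [map_sub, map_add, map_mul, map_pow, map_one, map_ofNat]
  ring
lemma cc_coeff0 : cc.coeff 0 = X^4 - X^2 := by
  rw [ccnf]
  simp only [coeff_add, coeff_C_mul, coeff_X_pow, coeff_C]
  norm_num [vP]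
lemma cc_coeff4 : cc.coeff 4 = 1 - X^2 := by
  rw [ccnf]
  simp only [coeff_add, coeff_C_mul, coeff_X_pow, coeff_C]
  norm_num [vW]

lemma hprim : ff.IsPrimitive := by
  intro ρ hρ
  have h3 : ρ ∣ a3 := by have := (C_dvd_iff_dvd_coeff ρ ff).1 hρ 3; rwa [ff_coeff3] at this
  have h1 : ρ ∣ cc := by have := (C_dvd_iff_dvd_coeff ρ ff).1 hρ 1; rwa [ff_coeff1] at this
  by_contra hnu
  have hρ0 : ρ ≠ 0 := by rintro rfl; exact a3_ne (zero_dvd_iff.1 h3)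
  obtain ⟨p, hpi, hpd⟩ := WfDvdMonoid.exists_irreducible_factor hnu hρ0
  have hpp : Prime p := UniqueFactorizationMonoid.irreducible_iff_prime.1 hpi
  have hpa3 : p ∣ (X * C X)^2 := by
    have := hpd.trans h3
    rwa [show a3 = (X*C X)^2 by rw [a3, mul_pow, map_pow]] at this
  rcases hpp.2.2 _ _ (hpp.dvd_of_dvd_pow hpa3) with hx | hcx
  · have hassoc := hpi.associated_of_dvd (prime_X.irreducible) hx
    have hXcc : (X : Rr) ∣ cc := hassoc.symm.dvd.trans (hpd.trans h1)
    have h0 := X_dvd_iff.1 hXcc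
    rw [cc_coeff0] at h0
    have := congrArg (Polynomial.eval (2:ℂ)) h0
    norm_num at this
  · have hdeg0 : p.natDegree = 0 := by
      have := natDegree_le_of_dvd hcx hCXne
      simpa [natDegree_C] using this
    have hpeq : p = C (p.coeff 0) := eq_C_of_natDegree_eq_zero hdeg0
    set p0 := p.coeff 0 with hp0
    have hp0X : p0 ∣ X := by
      have := (C_dvd_iff_dvd_coeff p0 (C X)).1 (by rwa [← hpeq]) 0
      simpa using this
    have hp0cc : p0 ∣ cc.coeff 4 := by
      have hpcc : C p0 ∣ cc := (hpeq ▸ hpd).trans h1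
      exact (C_dvd_iff_dvd_coeff p0 cc).1 hpcc 4
    rw [cc_coeff4] at hp0cc
    have hp0one : p0 ∣ 1 := by
      have : (1 : ℂ[X]) = (1 - X^2) + X*X := by ring
      rw [this]
      exact dvd_add hp0cc (Dvd.dvd.mul_left hp0X _)
    exact hpi.not_isUnit (hpeq ▸ isUnit_C.2 (isUnit_of_dvd_one hp0one))

end CharVar

namespace CharVar
open Polynomial

lemma hA3ne : A a3 ≠ 0 := fun h =>
  a3_ne ((map_eq_zero_iff A (IsFractionRing.injective Rr K)).1 h)

lemma ff_map_eq : ff.map A = Polynomial.C (A a3) * X^3 + Polynomial.C (A a2) * X^2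
    + Polynomial.C (A a1) * X + Polynomial.C (A a0) := by
  simp [ff, Polynomial.map_add, Polynomial.map_mul, Polynomial.map_pow, Polynomial.map_C,
    Polynomial.map_X]

lemma ff_map_natDegree : (ff.map A).natDegree = 3 := by
  rw [ff_map_eq]
  compute_degree!
  exact a3_ne

lemma ff_map_ne : ff.map A ≠ 0 := by
  intro h
  have := ff_map_natDegree
  rw [h] at this
  simp at this

lemma deg1_no_dvd (p : K[X]) (hdeg : p.natDegree = 1) (hdvd : p ∣ ff.map A) : False := by
  obtain ⟨q, hq⟩ := hdvd
  have hp1 : p.coeff 1 ≠ 0 := by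
    have hpne : p ≠ 0 := by rintro rfl; simp at hdeg
    have := Polynomial.leadingCoeff_ne_zero.2 hpne
    rwa [Polynomial.leadingCoeff, hdeg] at this
  set z : K := -(p.coeff 0) / (p.coeff 1) with hz
  have hpz : p.eval z = 0 := by
    have hpe : p = Polynomial.C (p.coeff 1) * X + Polynomial.C (p.coeff 0) := by
      have hd1 : p.degree ≤ 1 := by
        rw [Polynomial.degree_eq_natDegree (fun h => by rw [h] at hdeg; simp at hdeg)]
        exact_mod_cast hdeg.le
      exact Polynomial.eq_X_add_C_of_degree_le_one hd1
    rw [hpe]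
    simp only [eval_add, eval_mul, eval_C, eval_X, hz]
    field_simp
    ring
  have : (ff.map A).eval z = 0 := by rw [hq, eval_mul, hpz, zero_mul]
  rw [Polynomial.eval_map] at this
  exact no_root_K z this

theorem ff_irred : Irreducible ff := by
  letI := UniqueFactorizationMonoid.normalizationMonoid (α := Rr)
  letI := UniqueFactorizationMonoid.toNormalizedGCDMonoid Rr
  rw [hprim.irreducible_iff_irreducible_map_fraction_map (K := K)]
  constructor
  · intro hu
    have := Polynomial.natDegree_eq_zero_of_isUnit hu
    rw [ff_map_natDegree] at this
    exact three_ne_zero this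
  · intro p q hpq
    by_contra hcon
    push_neg at hcon
    obtain ⟨hup, huq⟩ := hcon
    have hp0 : p ≠ 0 := by rintro rfl; rw [zero_mul] at hpq; exact ff_map_ne hpq
    have hq0 : q ≠ 0 := by rintro rfl; rw [mul_zero] at hpq; exact ff_map_ne hpq
    have hsum : p.natDegree + q.natDegree = 3 := by
      rw [← natDegree_mul hp0 hq0, ← hpq, ff_map_natDegree]
    have hdp1 : 1 ≤ p.natDegree := by
      rcases Nat.eq_zero_or_pos p.natDegree with h0 | h
      · exfalso
        apply hup
        rw [eq_C_of_natDegree_eq_zero h0]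
        refine Polynomial.isUnit_C.2 (isUnit_iff_ne_zero.2 fun hc => hp0 ?_)
        rw [eq_C_of_natDegree_eq_zero h0, hc, map_zero]
      · exact h
    have hdq1 : 1 ≤ q.natDegree := by
      rcases Nat.eq_zero_or_pos q.natDegree with h0 | h
      · exfalso
        apply huq
        rw [eq_C_of_natDegree_eq_zero h0]
        refine Polynomial.isUnit_C.2 (isUnit_iff_ne_zero.2 fun hc => hq0 ?_)
        rw [eq_C_of_natDegree_eq_zero h0, hc, map_zero]
      · exact h
    rcases Nat.lt_or_ge p.natDegree 2 with h2 | h2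
    · exact deg1_no_dvd p (by omega) ⟨q, hpq⟩
    · exact deg1_no_dvd q (by omega) ⟨p, by rw [hpq]; ring⟩

end CharVar


namespace CharVar
open Polynomial

abbrev M := MvPolynomial (Fin 3) ℂ

def e0 : MvPolynomial (Fin 1) ℂ ≃ₐ[ℂ] ℂ[X] :=
  (MvPolynomial.finSuccEquiv ℂ 0).trans
    (Polynomial.mapAlgEquiv (MvPolynomial.isEmptyAlgEquiv ℂ (Fin 0)))

def e12 : MvPolynomial (Fin 2) ℂ ≃ₐ[ℂ] Rr :=
  (MvPolynomial.finSuccEquiv ℂ 1).trans (Polynomial.mapAlgEquiv e0)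

def E : M ≃ₐ[ℂ] Polynomial Rr :=
  (MvPolynomial.finSuccEquiv ℂ 2).trans (Polynomial.mapAlgEquiv e12)

lemma E_X0 : E (MvPolynomial.X 0) = X := by
  simp [E, e12, e0, MvPolynomial.finSuccEquiv_X_zero, Polynomial.mapAlgEquiv]

lemma e12_X0 : e12 (MvPolynomial.X 0) = X := by
  simp [e12, e0, MvPolynomial.finSuccEquiv_X_zero, Polynomial.mapAlgEquiv]

lemma e12_X1 : e12 (MvPolynomial.X 1) = C X := by
  have h1 : (MvPolynomial.finSuccEquiv ℂ 1) (MvPolynomial.X 1)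
      = Polynomial.C (MvPolynomial.X 0) := by
    rw [show (1 : Fin 2) = Fin.succ 0 from rfl, MvPolynomial.finSuccEquiv_X_succ]
  have h0 : e0 (MvPolynomial.X 0) = X := by
    simp [e0, MvPolynomial.finSuccEquiv_X_zero, Polynomial.mapAlgEquiv]
  show (Polynomial.mapAlgEquiv e0) ((MvPolynomial.finSuccEquiv ℂ 1) (MvPolynomial.X 1)) = _
  rw [h1]
  show Polynomial.map _ _ = _
  rw [Polynomial.map_C]
  exact congrArg C h0

lemma E_X1 : E (MvPolynomial.X 1) = Polynomial.C X := by
  have h1 : (MvPolynomial.finSuccEquiv ℂ 2) (MvPolynomial.X 1)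
      = Polynomial.C (MvPolynomial.X 0) := by
    rw [show (1 : Fin 3) = Fin.succ 0 from rfl, MvPolynomial.finSuccEquiv_X_succ]
  show (Polynomial.mapAlgEquiv e12) ((MvPolynomial.finSuccEquiv ℂ 2) (MvPolynomial.X 1)) = _
  rw [h1]
  show Polynomial.map _ _ = _
  rw [Polynomial.map_C]
  congr 1
  exact e12_X0

lemma E_X2 : E (MvPolynomial.X 2) = Polynomial.C (C X) := by
  have h1 : (MvPolynomial.finSuccEquiv ℂ 2) (MvPolynomial.X 2)
      = Polynomial.C (MvPolynomial.X 1) := by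
    rw [show (2 : Fin 3) = Fin.succ 1 from rfl, MvPolynomial.finSuccEquiv_X_succ]
  show (Polynomial.mapAlgEquiv e12) ((MvPolynomial.finSuccEquiv ℂ 2) (MvPolynomial.X 2)) = _
  rw [h1]
  show Polynomial.map _ _ = _
  rw [Polynomial.map_C]
  congr 1
  exact e12_X1

end CharVar

section
open CharVar

/-- The polynomial `f(1,t,u,v)` defining the chart `U₁` of the component `X₁` of the
SL(2,ℂ) character variety of the Whitehead link complement is irreducible in `ℂ[t,u,v]`. -/
theorem chart_polynomial_irreducible :
    Irreducible
      (let T : MvPolynomial (Fin 3) ℂ := MvPolynomial.X 0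
       let U : MvPolynomial (Fin 3) ℂ := MvPolynomial.X 1
       let V : MvPolynomial (Fin 3) ℂ := MvPolynomial.X 2
       U ^ 2 * V ^ 2 * T ^ 3
         + U * V * (U ^ 2 * V ^ 2 - 2 * U ^ 2 - 2 * V ^ 2 + 1) * T ^ 2
         + (U ^ 4 + V ^ 4 - U ^ 2 * (V ^ 2 - 1) ^ 2 - V ^ 2 * (U ^ 2 - 1) ^ 2) * T
         + U * V * (U ^ 2 - 1) * (V ^ 2 - 1)) := by
  show Irreducible
      (MvPolynomial.X 1 ^ 2 * MvPolynomial.X 2 ^ 2 * MvPolynomial.X 0 ^ 3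
         + MvPolynomial.X 1 * MvPolynomial.X 2 *
            (MvPolynomial.X 1 ^ 2 * MvPolynomial.X 2 ^ 2 - 2 * MvPolynomial.X 1 ^ 2
              - 2 * MvPolynomial.X 2 ^ 2 + 1) * MvPolynomial.X 0 ^ 2
         + (MvPolynomial.X 1 ^ 4 + MvPolynomial.X 2 ^ 4
              - MvPolynomial.X 1 ^ 2 * (MvPolynomial.X 2 ^ 2 - 1) ^ 2
              - MvPolynomial.X 2 ^ 2 * (MvPolynomial.X 1 ^ 2 - 1) ^ 2) * MvPolynomial.X 0
         + MvPolynomial.X 1 * MvPolynomial.X 2 * (MvPolynomial.X 1 ^ 2 - 1)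
            * (MvPolynomial.X 2 ^ 2 - 1) : M)
  rw [← MulEquiv.irreducible_iff E]
  have hE : E
      (MvPolynomial.X 1 ^ 2 * MvPolynomial.X 2 ^ 2 * MvPolynomial.X 0 ^ 3
         + MvPolynomial.X 1 * MvPolynomial.X 2 *
            (MvPolynomial.X 1 ^ 2 * MvPolynomial.X 2 ^ 2 - 2 * MvPolynomial.X 1 ^ 2
              - 2 * MvPolynomial.X 2 ^ 2 + 1) * MvPolynomial.X 0 ^ 2
         + (MvPolynomial.X 1 ^ 4 + MvPolynomial.X 2 ^ 4
              - MvPolynomial.X 1 ^ 2 * (MvPolynomial.X 2 ^ 2 - 1) ^ 2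
              - MvPolynomial.X 2 ^ 2 * (MvPolynomial.X 1 ^ 2 - 1) ^ 2) * MvPolynomial.X 0
         + MvPolynomial.X 1 * MvPolynomial.X 2 * (MvPolynomial.X 1 ^ 2 - 1)
            * (MvPolynomial.X 2 ^ 2 - 1) : M) = ff := by
    simp only [map_add, map_sub, map_mul, map_pow, map_one, map_ofNat, E_X0, E_X1, E_X2]
    rw [ff, a3, a2, a1, a0, bb, cc]
    simp only [map_add, map_sub, map_mul, map_pow, map_one, map_ofNat]
    try ring
  rw [hE]
  exact ff_irred

end
end
end
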